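/- For all a, b ∈ ℝ: ∫_ℝ Φ(az + b)²·φ(z) dz = Φ(b/√(1 + a²)) − 2·T(b/√(1 + a²), 1/√(1 + 2a²)). -/

import Mathlib

open MeasureTheory

/-- The standard normal density. -/
noncomputable def gaussPDF (z : ℝ) : ℝ := (Real.sqrt (2 * Real.pi))⁻¹ * Real.exp (-z ^ 2 / 2)

/-- The standard normal cumulative distribution function. -/
noncomputable def gaussCDF (x : ℝ) : ℝ := ∫ z in Set.Iic x, gaussPDF z

/-- Owen's T function. -/
noncomputable def owenT (β ϑ : ℝ) : ℝ := gaussPDF β * ∫ x in (0 : ℝ)..ϑ, gaussPDF (β * x) / (1 + x ^ 2)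

lemma gaussPDF_pos (z : ℝ) : 0 < gaussPDF z := by
  unfold gaussPDF
  positivity

lemma gaussPDF_nonneg (z : ℝ) : 0 ≤ gaussPDF z := (gaussPDF_pos z).le

lemma sqrt_two_pi_pos : (0:ℝ) < Real.sqrt (2 * Real.pi) := by positivity

lemma gaussPDF_le (z : ℝ) : gaussPDF z ≤ (Real.sqrt (2 * Real.pi))⁻¹ := by
  unfold gaussPDF
  have h1 : Real.exp (-z^2/2) ≤ 1 := by
    refine Real.exp_le_one_iff.2 ?_
    have : (0:ℝ) ≤ z^2 := sq_nonneg z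
    linarith
  calc (Real.sqrt (2 * Real.pi))⁻¹ * Real.exp (-z ^ 2 / 2)
      ≤ (Real.sqrt (2 * Real.pi))⁻¹ * 1 :=
        mul_le_mul_of_nonneg_left h1 (by positivity)
    _ = _ := mul_one _

lemma continuous_gaussPDF : Continuous gaussPDF := by
  unfold gaussPDF; fun_prop

lemma gaussPDF_eq_exp (z : ℝ) : gaussPDF z = (Real.sqrt (2*Real.pi))⁻¹ * Real.exp (-(1/2) * z^2) := by
  unfold gaussPDF; ring_nf

lemma integrable_gaussPDF : Integrable gaussPDF := by
  simp_rw [funext gaussPDF_eq_exp]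
  exact (integrable_exp_neg_mul_sq (by norm_num)).const_mul _

lemma integral_gaussPDF : ∫ z : ℝ, gaussPDF z = 1 := by
  simp_rw [funext gaussPDF_eq_exp]
  rw [integral_const_mul, integral_gaussian]
  rw [show Real.pi / (1/2) = 2 * Real.pi by ring]
  field_simp

lemma intervalIntegrable_gaussPDF (u v : ℝ) : IntervalIntegrable gaussPDF volume u v :=
  integrable_gaussPDF.intervalIntegrable

lemma gaussCDF_eq (x : ℝ) : gaussCDF x = gaussCDF 0 + ∫ t in (0:ℝ)..x, gaussPDF t := by
  have h := intervalIntegral.integral_Iic_sub_Iic (μ := volume) (f := gaussPDF) (a := (0:ℝ)) (b := x)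
    integrable_gaussPDF.integrableOn integrable_gaussPDF.integrableOn
  unfold gaussCDF
  linarith

lemma intervalIntegral_gaussPDF (u v : ℝ) :
    ∫ t in u..v, gaussPDF t = gaussCDF v - gaussCDF u := by
  unfold gaussCDF
  exact (intervalIntegral.integral_Iic_sub_Iic integrable_gaussPDF.integrableOn
    integrable_gaussPDF.integrableOn).symm

lemma hasDerivAt_gaussCDF (x : ℝ) : HasDerivAt gaussCDF (gaussPDF x) x := by
  have h : HasDerivAt (fun u => ∫ t in (0:ℝ)..u, gaussPDF t) (gaussPDF x) x :=
    intervalIntegral.integral_hasDerivAt_right (intervalIntegrable_gaussPDF 0 x)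
      (continuous_gaussPDF.stronglyMeasurableAtFilter _ _) continuous_gaussPDF.continuousAt
  have : HasDerivAt (fun u => gaussCDF 0 + ∫ t in (0:ℝ)..u, gaussPDF t) (gaussPDF x) x :=
    h.const_add _
  exact this.congr_of_eventuallyEq (Filter.Eventually.of_forall fun u => gaussCDF_eq u)

lemma continuous_gaussCDF : Continuous gaussCDF := by
  have : Differentiable ℝ gaussCDF := fun x => (hasDerivAt_gaussCDF x).differentiableAt
  exact this.continuous

lemma gaussCDF_nonneg (x : ℝ) : 0 ≤ gaussCDF x :=
  setIntegral_nonneg measurableSet_Iic fun z _ => gaussPDF_nonneg z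

lemma gaussCDF_le_one (x : ℝ) : gaussCDF x ≤ 1 := by
  rw [← integral_gaussPDF]
  exact setIntegral_le_integral integrable_gaussPDF
    (Filter.Eventually.of_forall gaussPDF_nonneg)

lemma gaussPDF_neg (z : ℝ) : gaussPDF (-z) = gaussPDF z := by
  unfold gaussPDF; ring_nf

lemma gaussCDF_zero : gaussCDF 0 = 1/2 := by
  have h1 : gaussCDF 0 + ∫ z in Set.Ioi (0:ℝ), gaussPDF z = 1 := by
    rw [← integral_gaussPDF]
    exact intervalIntegral.integral_Iic_add_Ioi integrable_gaussPDF.integrableOn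
      integrable_gaussPDF.integrableOn
  have h2 : ∫ z in Set.Ioi (0:ℝ), gaussPDF z = gaussCDF 0 := by
    have : ∫ z in Set.Ioi (0:ℝ), gaussPDF (-z) = ∫ z in Set.Iic (-(0:ℝ)), gaussPDF z :=
      integral_comp_neg_Ioi 0 gaussPDF
    simp_rw [gaussPDF_neg] at this
    rw [this]
    norm_num [gaussCDF]
  rw [h2] at h1; linarith

lemma tendsto_gaussCDF_atBot : Filter.Tendsto gaussCDF Filter.atBot (nhds 0) := by
  have h : ∀ x : ℝ, gaussCDF x = ∫ z : ℝ, Set.indicator (Set.Iic x) gaussPDF z := by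
    intro x
    rw [integral_indicator measurableSet_Iic]
    rfl
  rw [show gaussCDF = fun x => ∫ z : ℝ, Set.indicator (Set.Iic x) gaussPDF z from funext h]
  have := tendsto_integral_filter_of_dominated_convergence (μ := volume)
    (l := Filter.atBot (α := ℝ)) (F := fun x z => Set.indicator (Set.Iic x) gaussPDF z)
    (f := fun _ => 0) gaussPDF
    (Filter.Eventually.of_forall fun x =>
      (continuous_gaussPDF.aestronglyMeasurable).indicator measurableSet_Iic)
    (Filter.Eventually.of_forall fun x => Filter.Eventually.of_forall fun z => by
      by_cases hz : z ∈ Set.Iic x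
      · simp only [Set.indicator_of_mem hz, Real.norm_eq_abs,
          abs_of_nonneg (gaussPDF_nonneg z), le_refl]
      · simp only [Set.indicator_of_notMem hz]
        simpa using gaussPDF_nonneg z)
    integrable_gaussPDF
    (Filter.Eventually.of_forall fun z => by
      have : ∀ᶠ x in Filter.atBot (α := ℝ), Set.indicator (Set.Iic x) gaussPDF z = 0 := by
        filter_upwards [Filter.eventually_lt_atBot z] with x hx
        exact Set.indicator_of_notMem (by simpa using not_le.mpr hx) _
      exact Filter.Tendsto.congr' (this.mono fun x hx => hx.symm) tendsto_const_nhds)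
  simpa using this

lemma integral_comp_mul_add'' (f : ℝ → ℝ) (c d : ℝ) (hc : c ≠ 0) :
    ∫ z : ℝ, f (c * z + d) = |c|⁻¹ * ∫ y : ℝ, f y := by
  have h1 : ∫ z : ℝ, f (c * z + d) = ∫ z : ℝ, (fun y => f (y + d)) (c * z) := rfl
  rw [h1, MeasureTheory.Measure.integral_comp_mul_left (fun y => f (y + d)) c,
    integral_add_right_eq_self]
  simp [abs_inv, smul_eq_mul]

lemma hasDerivAt_gaussPDF (x : ℝ) : HasDerivAt gaussPDF (-x * gaussPDF x) x := by
  have h1 : HasDerivAt (fun z : ℝ => -z ^ 2 / 2) (-x) x := by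
    have := ((hasDerivAt_pow 2 x).neg).div_const 2
    simpa using this.congr_deriv (by ring)
  have h2 : HasDerivAt (fun z : ℝ => Real.exp (-z ^ 2 / 2)) (Real.exp (-x^2/2) * (-x)) x :=
    (Real.hasDerivAt_exp _).comp x h1
  have h3 := h2.const_mul ((Real.sqrt (2 * Real.pi))⁻¹)
  unfold gaussPDF
  exact h3.congr_deriv (by ring)

lemma gaussPDF_mul_gaussPDF (a b z : ℝ) :
    gaussPDF (a * z + b) * gaussPDF z
      = gaussPDF (b / Real.sqrt (1 + a ^ 2)) *
        gaussPDF (Real.sqrt (1 + a ^ 2) * z + a * b / Real.sqrt (1 + a ^ 2)) := by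
  have hs : Real.sqrt (1 + a ^ 2) ^ 2 = 1 + a ^ 2 := Real.sq_sqrt (by positivity)
  have hs0 : Real.sqrt (1 + a ^ 2) ≠ 0 := by positivity
  unfold gaussPDF
  rw [mul_mul_mul_comm, ← Real.exp_add, mul_mul_mul_comm, ← Real.exp_add]
  congr 1
  have h4 : Real.sqrt (1 + a ^ 2) ^ 4 = (1 + a ^ 2) ^ 2 := by
    rw [show (4:ℕ) = 2 * 2 from rfl, pow_mul, hs]
  congr 1
  field_simp
  ring_nf
  rw [h4, hs]
  ring

lemma tendsto_gaussPDF_atBot : Filter.Tendsto gaussPDF Filter.atBot (nhds 0) := by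
  have h1 : Filter.Tendsto (fun x : ℝ => x ^ 2 / 2) Filter.atBot Filter.atTop := by
    apply Filter.Tendsto.atTop_div_const (by norm_num)
    have h0 : Filter.Tendsto (fun x : ℝ => |x| ^ 2) Filter.atBot Filter.atTop :=
      (Filter.tendsto_pow_atTop two_ne_zero).comp Filter.tendsto_abs_atBot_atTop
    exact h0.congr fun x => sq_abs x
  have h2 : Filter.Tendsto (fun x : ℝ => Real.exp (-(x ^ 2 / 2))) Filter.atBot (nhds 0) :=
    Real.tendsto_exp_neg_atTop_nhds_zero.comp h1
  have h3 := h2.const_mul ((Real.sqrt (2 * Real.pi))⁻¹)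
  rw [mul_zero] at h3
  refine h3.congr fun x => ?_
  unfold gaussPDF
  ring_nf

lemma integrable_mul_gaussPDF {f : ℝ → ℝ} (hf : AEStronglyMeasurable f volume) (C : ℝ)
    (hC : ∀ z, |f z| ≤ C) : Integrable (fun z => f z * gaussPDF z) := by
  refine (integrable_gaussPDF.const_mul C).mono
    (hf.mul continuous_gaussPDF.aestronglyMeasurable) ?_
  filter_upwards with z
  rw [Real.norm_eq_abs, Real.norm_eq_abs, abs_mul, abs_of_nonneg (gaussPDF_nonneg z), abs_mul,
    abs_of_nonneg (gaussPDF_nonneg z)]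
  exact mul_le_mul_of_nonneg_right ((hC z).trans (le_abs_self C)) (gaussPDF_nonneg z)

lemma integral_gaussPDF_mul_gaussPDF (c d : ℝ) :
    ∫ u : ℝ, gaussPDF (c * u + d) * gaussPDF u
      = gaussPDF (d / Real.sqrt (1 + c ^ 2)) / Real.sqrt (1 + c ^ 2) := by
  have hs0 : (0:ℝ) < Real.sqrt (1 + c ^ 2) := by positivity
  simp_rw [gaussPDF_mul_gaussPDF c d]
  rw [integral_const_mul, integral_comp_mul_add'' gaussPDF _ _ (ne_of_gt hs0), integral_gaussPDF,
    mul_one, abs_of_pos hs0]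
  ring

lemma integrable_gaussCDF_comp_mul_gaussPDF (c d : ℝ) :
    Integrable (fun u => gaussCDF (c * u + d) * gaussPDF u) :=
  integrable_mul_gaussPDF ((continuous_gaussCDF.comp (by fun_prop)).aestronglyMeasurable) 1
    fun z => by rw [abs_of_nonneg (gaussCDF_nonneg _)]; exact gaussCDF_le_one _

lemma integrable_gaussPDF_comp_mul_gaussPDF (c d : ℝ) :
    Integrable (fun u => gaussPDF (c * u + d) * gaussPDF u) :=
  integrable_mul_gaussPDF ((continuous_gaussPDF.comp (by fun_prop)).aestronglyMeasurable)
    ((Real.sqrt (2*Real.pi))⁻¹) fun z => by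
      rw [abs_of_nonneg (gaussPDF_nonneg _)]; exact gaussPDF_le _

lemma hasDerivAt_comp_add (c u x : ℝ) :
    HasDerivAt (fun x => gaussCDF (c * u + x)) (gaussPDF (c * u + x)) x := by
  have h1 : HasDerivAt (fun x : ℝ => c * u + x) 1 x := (hasDerivAt_id x).const_add (c * u)
  have := (hasDerivAt_gaussCDF (c * u + x)).comp x h1
  exact this.congr_deriv (mul_one _)

lemma hasDerivAt_integral_gaussCDF (c d : ℝ) :
    HasDerivAt (fun d => ∫ u : ℝ, gaussCDF (c * u + d) * gaussPDF u)
      (∫ u : ℝ, gaussPDF (c * u + d) * gaussPDF u) d := by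
  have h := hasDerivAt_integral_of_dominated_loc_of_deriv_le (μ := volume) (𝕜 := ℝ)
    (F := fun d u => gaussCDF (c * u + d) * gaussPDF u)
    (F' := fun d u => gaussPDF (c * u + d) * gaussPDF u)
    (x₀ := d) (bound := fun u => (Real.sqrt (2 * Real.pi))⁻¹ * gaussPDF u)
    (Metric.ball_mem_nhds d one_pos)
    (Filter.Eventually.of_forall fun x =>
      (integrable_gaussCDF_comp_mul_gaussPDF c x).aestronglyMeasurable)
    (integrable_gaussCDF_comp_mul_gaussPDF c d)
    (integrable_gaussPDF_comp_mul_gaussPDF c d).aestronglyMeasurable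
    (Filter.Eventually.of_forall fun u x _ => by
      rw [Real.norm_eq_abs, abs_mul, abs_of_nonneg (gaussPDF_nonneg _),
        abs_of_nonneg (gaussPDF_nonneg _)]
      exact mul_le_mul_of_nonneg_right (gaussPDF_le _) (gaussPDF_nonneg u))
    (integrable_gaussPDF.const_mul _)
    (Filter.Eventually.of_forall fun u x _ => (hasDerivAt_comp_add c u x).mul_const (gaussPDF u))
  exact h.2

lemma eq_of_hasDerivAt_eq_of_tendsto {f g h : ℝ → ℝ}
    (hf : ∀ x, HasDerivAt f (h x) x) (hg : ∀ x, HasDerivAt g (h x) x)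
    (hft : Filter.Tendsto f Filter.atBot (nhds 0))
    (hgt : Filter.Tendsto g Filter.atBot (nhds 0)) : f = g := by
  have hD : ∀ x, HasDerivAt (fun x => f x - g x) 0 x := by
    intro x
    have := (hf x).sub (hg x); rw [sub_self] at this; exact this
  have hconst : ∀ x y : ℝ, f x - g x = f y - g y := fun x y =>
    is_const_of_deriv_eq_zero (fun z => (hD z).differentiableAt)
      (fun z => (hD z).deriv) x y
  funext x
  have h1 : Filter.Tendsto (fun y : ℝ => f y - g y) Filter.atBot (nhds 0) := by
    simpa using hft.sub hgt
  have h2 : Filter.Tendsto (fun y : ℝ => f y - g y) Filter.atBot (nhds (f x - g x)) := by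
    have : (fun y : ℝ => f y - g y) = fun _ => f x - g x := funext fun y => (hconst y x)
    rw [this]
    exact tendsto_const_nhds
  have := tendsto_nhds_unique h2 h1
  linarith

lemma tendsto_integral_gaussCDF_atBot (c : ℝ) :
    Filter.Tendsto (fun d => ∫ u : ℝ, gaussCDF (c * u + d) * gaussPDF u)
      Filter.atBot (nhds 0) := by
  have h := tendsto_integral_filter_of_dominated_convergence (μ := volume)
    (l := Filter.atBot (α := ℝ)) (F := fun d u => gaussCDF (c * u + d) * gaussPDF u)
    (f := fun _ => 0) gaussPDF
    (Filter.Eventually.of_forall fun x =>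
      (integrable_gaussCDF_comp_mul_gaussPDF c x).aestronglyMeasurable)
    (Filter.Eventually.of_forall fun x => Filter.Eventually.of_forall fun u => by
      rw [Real.norm_eq_abs, abs_mul, abs_of_nonneg (gaussPDF_nonneg _),
        abs_of_nonneg (gaussCDF_nonneg _)]
      nth_rewrite 2 [← one_mul (gaussPDF u)]
      exact mul_le_mul_of_nonneg_right (gaussCDF_le_one _) (gaussPDF_nonneg u))
    integrable_gaussPDF
    (Filter.Eventually.of_forall fun u => by
      have h1 : Filter.Tendsto (fun d : ℝ => c * u + d) Filter.atBot Filter.atBot :=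
        Filter.tendsto_atBot_add_const_left _ _ Filter.tendsto_id
      have h2 := (tendsto_gaussCDF_atBot.comp h1).mul_const (gaussPDF u)
      rw [zero_mul] at h2
      exact h2)
  simpa using h

lemma integral_gaussCDF_mul_gaussPDF (c d : ℝ) :
    ∫ u : ℝ, gaussCDF (c * u + d) * gaussPDF u = gaussCDF (d / Real.sqrt (1 + c ^ 2)) := by
  have hs0 : (0:ℝ) < Real.sqrt (1 + c ^ 2) := by positivity
  have key : (fun d => ∫ u : ℝ, gaussCDF (c * u + d) * gaussPDF u)
      = fun d => gaussCDF (d / Real.sqrt (1 + c ^ 2)) := by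
    apply eq_of_hasDerivAt_eq_of_tendsto
      (h := fun d => gaussPDF (d / Real.sqrt (1 + c ^ 2)) / Real.sqrt (1 + c ^ 2))
    · intro d
      have h1 := hasDerivAt_integral_gaussCDF c d
      rwa [integral_gaussPDF_mul_gaussPDF] at h1
    · intro d
      have h1 : HasDerivAt (fun d : ℝ => d / Real.sqrt (1 + c ^ 2))
          (1 / Real.sqrt (1 + c ^ 2)) d := by
        simpa using (hasDerivAt_id d).div_const (Real.sqrt (1 + c ^ 2))
      have h2 := (hasDerivAt_gaussCDF (d / Real.sqrt (1 + c ^ 2))).comp d h1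
      exact h2.congr_deriv (by ring)
    · exact tendsto_integral_gaussCDF_atBot c
    · have h1 : Filter.Tendsto (fun d : ℝ => d / Real.sqrt (1 + c ^ 2))
          Filter.atBot Filter.atBot :=
        Filter.tendsto_id.atBot_div_const hs0
      exact tendsto_gaussCDF_atBot.comp h1
  exact congrFun key d

lemma beta_intervalIntegral (β θ : ℝ) :
    β * ∫ x in (0:ℝ)..θ, gaussPDF (β * x) = gaussCDF (β * θ) - 1/2 := by
  rcases eq_or_ne β 0 with hβ | hβ
  · simp [hβ, gaussCDF_zero]
  · rw [intervalIntegral.integral_comp_mul_left gaussPDF hβ, mul_zero, smul_eq_mul,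
      intervalIntegral_gaussPDF, gaussCDF_zero]
    field_simp

lemma hasDerivAt_owenT (θ β : ℝ) :
    HasDerivAt (fun β => owenT β θ) (-(gaussPDF β) * (gaussCDF (β * θ) - 1/2)) β := by
  -- derivative of the interval integral part
  have hcont : ∀ (β' : ℝ), Continuous fun x => gaussPDF (β' * x) / (1 + x ^ 2) := by
    intro β'
    have h1 : ∀ x : ℝ, (0:ℝ) < 1 + x ^ 2 := fun x => by positivity
    exact (continuous_gaussPDF.comp (continuous_const.mul continuous_id)).div
      (by continuity) fun x => (h1 x).ne'
  have hcont' : ∀ (β' : ℝ), Continuous fun x => -β' * x ^ 2 * gaussPDF (β' * x) / (1 + x ^ 2) := by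
    intro β'
    have h1 : ∀ x : ℝ, (0:ℝ) < 1 + x ^ 2 := fun x => by positivity
    exact (((continuous_const.mul (continuous_pow 2)).mul
      (continuous_gaussPDF.comp (continuous_const.mul continuous_id))).div
      (by continuity) fun x => (h1 x).ne')
  have hI := intervalIntegral.hasDerivAt_integral_of_dominated_loc_of_deriv_le
    (μ := volume) (𝕜 := ℝ) (a := (0:ℝ)) (b := θ)
    (F := fun β x => gaussPDF (β * x) / (1 + x ^ 2))
    (F' := fun β x => -β * x ^ 2 * gaussPDF (β * x) / (1 + x ^ 2))
    (x₀ := β) (bound := fun _ => (|β| + 1) * (Real.sqrt (2 * Real.pi))⁻¹)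
    (Metric.ball_mem_nhds β one_pos)
    (Filter.Eventually.of_forall fun β' => ((hcont β').aestronglyMeasurable).restrict)
    ((hcont β).intervalIntegrable 0 θ)
    (((hcont' β).aestronglyMeasurable).restrict)
    (Filter.Eventually.of_forall fun x _ β' hβ' => by
      have h1 : (0:ℝ) < 1 + x ^ 2 := by positivity
      rw [Real.norm_eq_abs, abs_div, abs_of_pos h1, abs_mul, abs_mul, abs_neg, abs_pow]
      rw [abs_of_nonneg (gaussPDF_nonneg _)]
      have hb : |β'| ≤ |β| + 1 := by
        have := abs_sub_abs_le_abs_sub β' β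
        simp only [Metric.mem_ball, Real.dist_eq] at hβ'
        linarith [hβ'.le]
      calc |β'| * |x| ^ 2 * gaussPDF (β' * x) / (1 + x ^ 2)
          ≤ |β'| * (1 + x ^ 2) * (Real.sqrt (2 * Real.pi))⁻¹ / (1 + x ^ 2) := by
            gcongr
            all_goals first
              | exact gaussPDF_nonneg _
              | exact gaussPDF_le _
              | (rw [sq_abs]; nlinarith [sq_nonneg x])
              | positivity
        _ = |β'| * (Real.sqrt (2 * Real.pi))⁻¹ := by
            field_simp
        _ ≤ (|β| + 1) * (Real.sqrt (2 * Real.pi))⁻¹ :=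
            mul_le_mul_of_nonneg_right hb (by positivity))
    (intervalIntegrable_const)
    (Filter.Eventually.of_forall fun x _ β' _ => by
      have h1 : HasDerivAt (fun β' : ℝ => β' * x) x β' := by
        simpa using (hasDerivAt_id β').mul_const x
      have h2 := (hasDerivAt_gaussPDF (β' * x)).comp β' h1
      have h3 := h2.div_const (1 + x ^ 2)
      exact h3.congr_deriv (by ring))
  have int1 : IntervalIntegrable (fun x => gaussPDF (β * x) / (1 + x ^ 2)) volume 0 θ :=
    (hcont β).intervalIntegrable 0 θ
  have int2 : IntervalIntegrable (fun x => x ^ 2 * gaussPDF (β * x) / (1 + x ^ 2)) volume 0 θ := by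
    have h1 : ∀ x : ℝ, (0:ℝ) < 1 + x ^ 2 := fun x => by positivity
    exact (((continuous_pow 2).mul
      (continuous_gaussPDF.comp (continuous_const.mul continuous_id))).div
      (by continuity) fun x => (h1 x).ne').intervalIntegrable 0 θ
  have hJ : (∫ x in (0:ℝ)..θ, -β * x ^ 2 * gaussPDF (β * x) / (1 + x ^ 2))
      = -β * ∫ x in (0:ℝ)..θ, x ^ 2 * gaussPDF (β * x) / (1 + x ^ 2) := by
    rw [← intervalIntegral.integral_const_mul]
    congr 1
    funext x
    ring
  have hsum : (∫ x in (0:ℝ)..θ, gaussPDF (β * x) / (1 + x ^ 2))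
      + (∫ x in (0:ℝ)..θ, x ^ 2 * gaussPDF (β * x) / (1 + x ^ 2))
      = ∫ x in (0:ℝ)..θ, gaussPDF (β * x) := by
    rw [← intervalIntegral.integral_add int1 int2]
    congr 1
    funext x
    have h1 : (0:ℝ) < 1 + x ^ 2 := by positivity
    field_simp
  have hD := (hasDerivAt_gaussPDF β).mul hI.2
  have heq : (fun β => owenT β θ)
      = fun β => gaussPDF β * ∫ x in (0:ℝ)..θ, gaussPDF (β * x) / (1 + x ^ 2) := rfl
  rw [heq]
  refine hD.congr_deriv ?_
  symm
  rw [hJ]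
  have hb := beta_intervalIntegral β θ
  linear_combination gaussPDF β * hb + β * gaussPDF β * hsum

lemma tendsto_owenT_atBot (θ : ℝ) :
    Filter.Tendsto (fun β => owenT β θ) Filter.atBot (nhds 0) := by
  have hbound : ∀ β : ℝ, ‖owenT β θ‖ ≤ gaussPDF β * ((Real.sqrt (2 * Real.pi))⁻¹ * |θ - 0|) := by
    intro β
    unfold owenT
    rw [Real.norm_eq_abs, abs_mul, abs_of_nonneg (gaussPDF_nonneg β)]
    apply mul_le_mul_of_nonneg_left ?_ (gaussPDF_nonneg β)
    have h := intervalIntegral.norm_integral_le_of_norm_le_const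
      (C := (Real.sqrt (2 * Real.pi))⁻¹)
      (f := fun x => gaussPDF (β * x) / (1 + x ^ 2)) (a := 0) (b := θ) ?_
    · rw [Real.norm_eq_abs] at h
      linarith [h]
    · intro x _
      have h1 : (0:ℝ) < 1 + x ^ 2 := by positivity
      rw [Real.norm_eq_abs, abs_div, abs_of_pos h1, abs_of_nonneg (gaussPDF_nonneg _)]
      calc gaussPDF (β * x) / (1 + x ^ 2) ≤ gaussPDF (β * x) / 1 := by
            gcongr
            · exact gaussPDF_nonneg _
            · nlinarith [sq_nonneg x]
        _ = gaussPDF (β * x) := div_one _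
        _ ≤ _ := gaussPDF_le _
  have hg : Filter.Tendsto
      (fun β => gaussPDF β * ((Real.sqrt (2 * Real.pi))⁻¹ * |θ - 0|))
      Filter.atBot (nhds 0) := by
    have := tendsto_gaussPDF_atBot.mul_const ((Real.sqrt (2 * Real.pi))⁻¹ * |θ - 0|)
    rwa [zero_mul] at this
  exact squeeze_zero_norm hbound hg

/-- Identity (4.25): `E[Φ(aZ + b)²] = Φ(b/√(1+a²)) − 2T(b/√(1+a²), 1/√(1+2a²))` for a
standard normal `Z`, where `T` is Owen's T function. -/
theorem stmt_13 (a b : ℝ) :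
    (∫ z : ℝ, (gaussCDF (a * z + b)) ^ 2 * gaussPDF z)
      = gaussCDF (b / Real.sqrt (1 + a ^ 2))
        - 2 * owenT (b / Real.sqrt (1 + a ^ 2)) (1 / Real.sqrt (1 + 2 * a ^ 2)) := by
  set s : ℝ := Real.sqrt (1 + a ^ 2) with hs_def
  set θ : ℝ := 1 / Real.sqrt (1 + 2 * a ^ 2) with hθ_def
  have hs0 : (0:ℝ) < s := by rw [hs_def]; positivity
  have hs2 : s ^ 2 = 1 + a ^ 2 := Real.sq_sqrt (by positivity)
  have ht0 : (0:ℝ) < Real.sqrt (1 + 2 * a ^ 2) := by positivity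
  have ht2 : Real.sqrt (1 + 2 * a ^ 2) ^ 2 = 1 + 2 * a ^ 2 := Real.sq_sqrt (by positivity)
  -- integrability of the square integrand
  have hint : ∀ b : ℝ, Integrable (fun z => (gaussCDF (a * z + b)) ^ 2 * gaussPDF z) := by
    intro b
    refine integrable_mul_gaussPDF ?_ 1 ?_
    · exact ((continuous_gaussCDF.comp (by fun_prop)).pow 2).aestronglyMeasurable
    · intro z
      rw [abs_pow, abs_of_nonneg (gaussCDF_nonneg _)]
      calc gaussCDF (a * z + b) ^ 2 ≤ 1 ^ 2 := by
            gcongr <;> first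
              | exact gaussCDF_nonneg _
              | exact gaussCDF_le_one _
              | exact gaussPDF_le _
              | exact gaussPDF_nonneg _
              | positivity
        _ = 1 := one_pow 2
  have hint' : ∀ b : ℝ, Integrable
      (fun z => (2 * gaussCDF (a * z + b) ^ 1 * gaussPDF (a * z + b)) * gaussPDF z) := by
    intro b
    refine integrable_mul_gaussPDF ?_ (2 * (Real.sqrt (2 * Real.pi))⁻¹) ?_
    · have : Continuous fun z : ℝ => 2 * gaussCDF (a * z + b) ^ 1 * gaussPDF (a * z + b) := by
        have h1 : Continuous fun z : ℝ => a * z + b := by fun_prop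
        exact (continuous_const.mul ((continuous_gaussCDF.comp h1).pow 1)).mul
          (continuous_gaussPDF.comp h1)
      exact this.aestronglyMeasurable
    · intro z
      rw [abs_mul, abs_mul, abs_of_nonneg (gaussPDF_nonneg _), abs_pow,
        abs_of_nonneg (gaussCDF_nonneg _)]
      rw [show |(2:ℝ)| = 2 by norm_num]
      calc 2 * gaussCDF (a * z + b) ^ 1 * gaussPDF (a * z + b)
          ≤ 2 * 1 ^ 1 * (Real.sqrt (2 * Real.pi))⁻¹ := by
            gcongr <;> first
              | exact gaussCDF_nonneg _
              | exact gaussCDF_le_one _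
              | exact gaussPDF_le _
              | exact gaussPDF_nonneg _
              | positivity
        _ = 2 * (Real.sqrt (2 * Real.pi))⁻¹ := by ring
  -- value of the derivative integral
  have hval : ∀ b : ℝ,
      (∫ z : ℝ, (2 * gaussCDF (a * z + b) ^ 1 * gaussPDF (a * z + b)) * gaussPDF z)
        = 2 / s * gaussPDF (b / s) * gaussCDF (b / s * θ) := by
    intro b
    have e1 : ∀ z : ℝ, (2 * gaussCDF (a * z + b) ^ 1 * gaussPDF (a * z + b)) * gaussPDF z
        = 2 * gaussPDF (b / s) *
          ((fun u => gaussCDF (a / s * u + b / s ^ 2) * gaussPDF u) (s * z + a * b / s)) := by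
      intro z
      have h2 := gaussPDF_mul_gaussPDF a b z
      have h3 : a / s * (s * z + a * b / s) + b / s ^ 2 = a * z + b := by
        field_simp
        linear_combination (-b) * hs2
      simp only [h3, pow_one]
      linear_combination 2 * gaussCDF (a * z + b) * h2
    rw [show (fun z : ℝ => (2 * gaussCDF (a * z + b) ^ 1 * gaussPDF (a * z + b)) * gaussPDF z)
        = fun z : ℝ => 2 * gaussPDF (b / s) *
          ((fun u => gaussCDF (a / s * u + b / s ^ 2) * gaussPDF u) (s * z + a * b / s))
      from funext e1]
    have hcm := integral_comp_mul_add''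
      (fun u => gaussCDF (a / s * u + b / s ^ 2) * gaussPDF u) s (a * b / s) hs0.ne'
    rw [integral_const_mul, hcm,
      integral_gaussCDF_mul_gaussPDF (a / s) (b / s ^ 2), abs_of_pos hs0]
    have harg : b / s ^ 2 / Real.sqrt (1 + (a / s) ^ 2) = b / s * θ := by
      have h4 : 1 + (a / s) ^ 2 = (1 + 2 * a ^ 2) / s ^ 2 := by
        field_simp
        linear_combination hs2
      rw [h4, Real.sqrt_div (by positivity) _, Real.sqrt_sq hs0.le, hθ_def]
      field_simp
    rw [harg]
    ring
  -- the common derivative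
  apply congrFun (eq_of_hasDerivAt_eq_of_tendsto
    (h := fun b => 2 / s * gaussPDF (b / s) * gaussCDF (b / s * θ)) ?_ ?_ ?_ ?_) b
  · -- derivative of the LHS
    intro b
    have h := hasDerivAt_integral_of_dominated_loc_of_deriv_le (μ := volume) (𝕜 := ℝ)
      (F := fun b z => (gaussCDF (a * z + b)) ^ 2 * gaussPDF z)
      (F' := fun b z => (2 * gaussCDF (a * z + b) ^ 1 * gaussPDF (a * z + b)) * gaussPDF z)
      (x₀ := b) (bound := fun z => 2 * (Real.sqrt (2 * Real.pi))⁻¹ * gaussPDF z)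
      (Metric.ball_mem_nhds b one_pos)
      (Filter.Eventually.of_forall fun x => (hint x).aestronglyMeasurable)
      (hint b) (hint' b).aestronglyMeasurable
      (Filter.Eventually.of_forall fun z x _ => by
        rw [Real.norm_eq_abs, abs_of_nonneg (mul_nonneg (mul_nonneg (mul_nonneg
          (by norm_num : (0:ℝ) ≤ 2) (pow_nonneg (gaussCDF_nonneg _) 1)) (gaussPDF_nonneg _))
          (gaussPDF_nonneg _))]
        calc 2 * gaussCDF (a * z + x) ^ 1 * gaussPDF (a * z + x) * gaussPDF z
            ≤ 2 * 1 ^ 1 * (Real.sqrt (2 * Real.pi))⁻¹ * gaussPDF z := by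
              gcongr <;> first
              | exact gaussCDF_nonneg _
              | exact gaussCDF_le_one _
              | exact gaussPDF_le _
              | exact gaussPDF_nonneg _
              | positivity
          _ = 2 * (Real.sqrt (2 * Real.pi))⁻¹ * gaussPDF z := by ring)
      ((integrable_gaussPDF.const_mul _))
      (Filter.Eventually.of_forall fun z x _ => by
        have h1 := (hasDerivAt_comp_add a z x).pow 2
        have h2 := h1.mul_const (gaussPDF z)
        exact h2.congr_deriv (by norm_num))
    have h2 := h.2
    rwa [hval b] at h2
  · -- derivative of the RHS
    intro b
    have h1 : HasDerivAt (fun b : ℝ => b / s) (1 / s) b := by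
      simpa using (hasDerivAt_id b).div_const s
    have h2 := (hasDerivAt_gaussCDF (b / s)).comp b h1
    have h3 := ((hasDerivAt_owenT θ (b / s)).comp b h1).const_mul 2
    have h4 := h2.sub h3
    refine h4.congr_deriv ?_
    field_simp
    ring
  · -- limit of the LHS at -∞
    have h := tendsto_integral_filter_of_dominated_convergence (μ := volume)
      (l := Filter.atBot (α := ℝ))
      (F := fun b z => (gaussCDF (a * z + b)) ^ 2 * gaussPDF z)
      (f := fun _ => 0) gaussPDF
      (Filter.Eventually.of_forall fun x => (hint x).aestronglyMeasurable)
      (Filter.Eventually.of_forall fun x => Filter.Eventually.of_forall fun z => by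
        rw [Real.norm_eq_abs, abs_mul, abs_of_nonneg (gaussPDF_nonneg _), abs_pow,
          abs_of_nonneg (gaussCDF_nonneg _)]
        nth_rewrite 2 [← one_mul (gaussPDF z)]
        apply mul_le_mul_of_nonneg_right ?_ (gaussPDF_nonneg z)
        calc gaussCDF (a * z + x) ^ 2 ≤ 1 ^ 2 := by
              gcongr <;> first
              | exact gaussCDF_nonneg _
              | exact gaussCDF_le_one _
              | exact gaussPDF_le _
              | exact gaussPDF_nonneg _
              | positivity
          _ = 1 := one_pow 2)
      integrable_gaussPDF
      (Filter.Eventually.of_forall fun z => by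
        have h1 : Filter.Tendsto (fun b : ℝ => a * z + b) Filter.atBot Filter.atBot :=
          Filter.tendsto_atBot_add_const_left _ _ Filter.tendsto_id
        have h2 := ((tendsto_gaussCDF_atBot.comp h1).pow 2).mul_const (gaussPDF z)
        norm_num at h2
        exact h2)
    simpa using h
  · -- limit of the RHS at -∞
    have h1 : Filter.Tendsto (fun b : ℝ => b / s) Filter.atBot Filter.atBot :=
      Filter.tendsto_id.atBot_div_const hs0
    have h2 := tendsto_gaussCDF_atBot.comp h1
    have h3 := ((tendsto_owenT_atBot θ).comp h1).const_mul 2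
    have h4 := h2.sub h3
    norm_num at h4
    exact h4
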